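/- Let α, β ∈ ℝ. The sum Ẑ_{α,β,G} := 2 Σ_{ξ ∈ ℤ₊ⁿ} |{i : ξᵢ > 0}| · e^{W(ξ)} is finite if and only if α < 0 and α + β λ₁(G) < 0. Equivalently, the function ξ ↦ |{i : ξᵢ > 0}| e^{W(ξ)} on ℤ₊ⁿ is summable if and only if α < 0 and α + β λ₁(G) < 0. -/

import Mathlib

open Finset Real Matrix

set_option maxHeartbeats 1000000

/-- `W(ξ) = (α/2) Σᵢ ξᵢ(ξᵢ−1) + β Σ_{edges i∼j} ξᵢξⱼ`, with the edge sum written as half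
the double sum over the entries of the adjacency matrix (each edge is counted twice). -/
noncomputable def W {n : ℕ} (G : SimpleGraph (Fin n)) [DecidableRel G.Adj]
    (α β : ℝ) (ξ : Fin n → ℕ) : ℝ :=
  α / 2 * ∑ i, (ξ i : ℝ) * ((ξ i : ℝ) - 1)
    + β / 2 * ∑ i, ∑ j, G.adjMatrix ℝ i j * (ξ i : ℝ) * (ξ j : ℝ)

section aux

variable {n : ℕ}

lemma adj_herm (G : SimpleGraph (Fin n)) [DecidableRel G.Adj] :
    (G.adjMatrix ℝ).IsHermitian := by
  rw [Matrix.IsHermitian, Matrix.conjTranspose_eq_transpose_of_trivial,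
    G.transpose_adjMatrix]

lemma psd_aux (G : SimpleGraph (Fin n)) [DecidableRel G.Adj] (lam1 : ℝ)
    (hlam : IsGreatest
      {μ : ℝ | ∃ v : Fin n → ℝ, v ≠ 0 ∧ (G.adjMatrix ℝ).mulVec v = μ • v} lam1) :
    (lam1 • (1 : Matrix (Fin n) (Fin n) ℝ) - G.adjMatrix ℝ).PosSemidef := by
  set A := G.adjMatrix ℝ with hA
  set M := lam1 • (1 : Matrix (Fin n) (Fin n) ℝ) - A with hMdef
  have hM : M.IsHermitian := by
    rw [Matrix.IsHermitian, Matrix.conjTranspose_eq_transpose_of_trivial]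
    simp [hMdef, hA, Matrix.transpose_sub, Matrix.transpose_smul, G.transpose_adjMatrix]
  apply hM.posSemidef_iff_eigenvalues_nonneg.mpr
  intro i
  have hv := hM.mulVec_eigenvectorBasis i
  set v : Fin n → ℝ := ⇑(hM.eigenvectorBasis i) with hvdef
  have hvne : v ≠ 0 := by
    have := hM.eigenvectorBasis.orthonormal.ne_zero i
    intro h
    apply this
    ext j
    exact congrFun h j
  have hAv : A.mulVec v = (lam1 - hM.eigenvalues i) • v := by
    have : M.mulVec v = lam1 • v - A.mulVec v := by
      simp [hMdef, Matrix.sub_mulVec, Matrix.smul_mulVec]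
    rw [this] at hv
    ext j
    have := congrFun hv j
    simp only [Pi.sub_apply, Pi.smul_apply, smul_eq_mul] at this ⊢
    ring_nf
    ring_nf at this
    linarith
  have : lam1 - hM.eigenvalues i ∈
      {μ : ℝ | ∃ v : Fin n → ℝ, v ≠ 0 ∧ (G.adjMatrix ℝ).mulVec v = μ • v} :=
    ⟨v, hvne, hAv⟩
  have := hlam.2 this
  rw [Pi.zero_apply]
  linarith


lemma rayleigh_aux {A : Matrix (Fin n) (Fin n) ℝ} {lam1 : ℝ}
    (hPSD : (lam1 • (1 : Matrix (Fin n) (Fin n) ℝ) - A).PosSemidef)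
    (x : Fin n → ℝ) : x ⬝ᵥ A.mulVec x ≤ lam1 * (x ⬝ᵥ x) := by
  have h := hPSD.dotProduct_mulVec_nonneg x
  rw [star_trivial] at h
  rw [Matrix.sub_mulVec, Matrix.smul_mulVec, Matrix.one_mulVec,
    dotProduct_sub, dotProduct_smul] at h
  simp only [smul_eq_mul] at h
  linarith

lemma perron_aux (G : SimpleGraph (Fin n)) [DecidableRel G.Adj] (lam1 : ℝ)
    (hlam : IsGreatest
      {μ : ℝ | ∃ v : Fin n → ℝ, v ≠ 0 ∧ (G.adjMatrix ℝ).mulVec v = μ • v} lam1) :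
    ∃ w : Fin n → ℝ, w ≠ 0 ∧ (∀ i, 0 ≤ w i) ∧
      (G.adjMatrix ℝ).mulVec w = lam1 • w := by
  obtain ⟨v, hvne, hAv⟩ := hlam.1
  set A := G.adjMatrix ℝ with hAdef
  set M := lam1 • (1 : Matrix (Fin n) (Fin n) ℝ) - A with hMdef
  have hPSD := psd_aux G lam1 hlam
  set w : Fin n → ℝ := fun i => |v i| with hwdef
  have hwne : w ≠ 0 := by
    intro h
    apply hvne
    ext i
    have := congrFun h i
    simpa [hwdef, abs_eq_zero] using this
  refine ⟨w, hwne, fun i => abs_nonneg _, ?_⟩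
  -- quadratic form of M at w is zero
  have hqv : v ⬝ᵥ M.mulVec v = 0 := by
    rw [hMdef, Matrix.sub_mulVec, Matrix.smul_mulVec, Matrix.one_mulVec,
      dotProduct_sub, hAv, dotProduct_smul]
    simp
  have hww : w ⬝ᵥ w = v ⬝ᵥ v := by
    simp only [dotProduct, hwdef, abs_mul_abs_self]
  have hwAw : v ⬝ᵥ A.mulVec v ≤ w ⬝ᵥ A.mulVec w := by
    simp only [dotProduct, Matrix.mulVec, Finset.mul_sum]
    apply Finset.sum_le_sum
    intro i _
    apply Finset.sum_le_sum
    intro j _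
    have hij : (0:ℝ) ≤ A i j := by
      rw [hAdef, SimpleGraph.adjMatrix_apply]; split <;> norm_num
    have h1 : v i * (A i j * v j) ≤ |v i * (A i j * v j)| := le_abs_self _
    have h2 : |v i * (A i j * v j)| = w i * (A i j * w j) := by
      simp only [hwdef]
      rw [abs_mul, abs_mul, abs_of_nonneg hij]
    linarith
  have hqw0 : w ⬝ᵥ M.mulVec w ≤ 0 := by
    rw [hMdef, Matrix.sub_mulVec, Matrix.smul_mulVec, Matrix.one_mulVec,
      dotProduct_sub, dotProduct_smul]
    rw [hMdef, Matrix.sub_mulVec, Matrix.smul_mulVec, Matrix.one_mulVec,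
      dotProduct_sub, dotProduct_smul] at hqv
    simp only [smul_eq_mul] at hqv ⊢
    rw [hww]
    linarith
  have hq : w ⬝ᵥ M.mulVec w = 0 := le_antisymm hqw0 (by simpa using hPSD.dotProduct_mulVec_nonneg w)
  have hMw : M.mulVec w = 0 := by
    have := (hPSD.dotProduct_mulVec_zero_iff w).1 (by simpa using hq)
    exact this
  have : A.mulVec w = lam1 • w - M.mulVec w := by
    rw [hMdef, Matrix.sub_mulVec, Matrix.smul_mulVec, Matrix.one_mulVec]
    abel
  rw [this, hMw, sub_zero]

lemma lam1_nonneg (G : SimpleGraph (Fin n)) [DecidableRel G.Adj] (lam1 : ℝ)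
    (hlam : IsGreatest
      {μ : ℝ | ∃ v : Fin n → ℝ, v ≠ 0 ∧ (G.adjMatrix ℝ).mulVec v = μ • v} lam1) :
    0 ≤ lam1 := by
  obtain ⟨w, hwne, hwpos, hAw⟩ := perron_aux G lam1 hlam
  have h1 : 0 ≤ w ⬝ᵥ (G.adjMatrix ℝ).mulVec w := by
    simp only [dotProduct, Matrix.mulVec]
    apply Finset.sum_nonneg
    intro i _
    apply mul_nonneg (hwpos i)
    apply Finset.sum_nonneg
    intro j _
    apply mul_nonneg _ (hwpos j)
    rw [SimpleGraph.adjMatrix_apply]; split <;> norm_num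
  rw [hAw, dotProduct_smul] at h1
  have h2 : 0 < w ⬝ᵥ w := by
    rcases Function.ne_iff.1 hwne with ⟨i, hi⟩
    have : 0 < w i := lt_of_le_of_ne (hwpos i) (Ne.symm (by simpa using hi))
    apply Finset.sum_pos' (fun j _ => mul_nonneg (hwpos j) (hwpos j))
    exact ⟨i, Finset.mem_univ i, by positivity⟩
  simp only [smul_eq_mul] at h1
  nlinarith


lemma summable_exp_quad {c d : ℝ} (hc : c < 0) :
    Summable (fun k : ℕ => Real.exp (c * k ^ 2 + d * k)) := by
  apply summable_of_ratio_norm_eventually_le (r := Real.exp (-1))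
    (by rw [Real.exp_lt_one_iff]; norm_num)
  filter_upwards [Filter.eventually_ge_atTop ⌈(-1 - c - d) / (2 * c)⌉₊] with k hk
  have hk' : (-1 - c - d) / (2 * c) ≤ (k : ℝ) :=
    le_trans (Nat.le_ceil _) (by exact_mod_cast hk)
  have h2c : 2 * c < 0 := by linarith
  have hkey : 2 * c * (k : ℝ) ≤ -1 - c - d := by
    have := mul_le_mul_of_nonpos_left hk' (le_of_lt h2c)
    rwa [mul_div_cancel₀ _ (ne_of_lt h2c)] at this
  rw [Real.norm_eq_abs, Real.norm_eq_abs, abs_of_pos (Real.exp_pos _),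
    abs_of_pos (Real.exp_pos _), ← Real.exp_add, Real.exp_le_exp]
  push_cast
  nlinarith [hkey]

lemma summable_pi_prod {f : ℕ → ℝ} (hf : Summable f) (h0 : ∀ k, 0 ≤ f k) :
    ∀ m : ℕ, Summable (fun ξ : Fin m → ℕ => ∏ i, f (ξ i)) := by
  intro m
  induction m with
  | zero => exact Summable.of_finite
  | succ m ih =>
    have hg : Summable (fun p : ℕ × (Fin m → ℕ) => f p.1 * ∏ i, f (p.2 i)) :=
      Summable.mul_of_nonneg (f := f) (g := fun ξ : Fin m → ℕ => ∏ i, f (ξ i))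
        hf ih h0 (fun ξ => Finset.prod_nonneg (fun i _ => h0 _))
    have := ((Fin.consEquiv (fun _ : Fin (m + 1) => ℕ)).summable_iff
      (f := fun ξ : Fin (m + 1) → ℕ => ∏ i, f (ξ i))).1 ?_
    · exact this
    · convert hg using 1
      funext p
      simp only [Function.comp_apply, Fin.consEquiv_apply]
      rw [Fin.prod_univ_succ]
      simp


lemma adj_quad_nonneg (G : SimpleGraph (Fin n)) [DecidableRel G.Adj]
    (x : Fin n → ℝ) (hx : ∀ i, 0 ≤ x i) :
    0 ≤ x ⬝ᵥ (G.adjMatrix ℝ).mulVec x := by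
  simp only [dotProduct, Matrix.mulVec]
  apply Finset.sum_nonneg
  intro i _
  apply mul_nonneg (hx i)
  apply Finset.sum_nonneg
  intro j _
  apply mul_nonneg _ (hx j)
  rw [SimpleGraph.adjMatrix_apply]; split <;> norm_num

lemma W_eq (G : SimpleGraph (Fin n)) [DecidableRel G.Adj] (α β : ℝ) (ξ : Fin n → ℕ) :
    W G α β ξ = α / 2 * (∑ i, ((ξ i : ℝ)) ^ 2) - α / 2 * (∑ i, (ξ i : ℝ))
      + β / 2 * ((fun i => (ξ i : ℝ)) ⬝ᵥ (G.adjMatrix ℝ).mulVec (fun i => (ξ i : ℝ))) := by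
  have h1 : ∑ i, (ξ i : ℝ) * ((ξ i : ℝ) - 1)
      = (∑ i, ((ξ i : ℝ)) ^ 2) - ∑ i, (ξ i : ℝ) := by
    rw [← Finset.sum_sub_distrib]
    exact Finset.sum_congr rfl (fun i _ => by ring)
  have h2 : ∑ i, ∑ j, G.adjMatrix ℝ i j * (ξ i : ℝ) * (ξ j : ℝ)
      = (fun i => (ξ i : ℝ)) ⬝ᵥ (G.adjMatrix ℝ).mulVec (fun i => (ξ i : ℝ)) := by
    simp only [dotProduct, Matrix.mulVec, Finset.mul_sum]
    exact Finset.sum_congr rfl (fun i _ => Finset.sum_congr rfl (fun j _ => by ring))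
  rw [W, h1, h2]
  ring

end aux

/-- `Ẑ_{α,β,G} = 2 Σ_ξ |{i : ξᵢ > 0}| e^{W(ξ)} < ∞` iff `α < 0` and `α + β λ₁(G) < 0`,
i.e. `ξ ↦ |{i : ξᵢ > 0}| e^{W(ξ)}` is summable iff `α < 0` and `α + β λ₁(G) < 0`. -/
theorem stmt3 {n : ℕ} (hn : 0 < n) (G : SimpleGraph (Fin n)) [DecidableRel G.Adj]
    (α β : ℝ) (lam1 : ℝ)
    (hlam : IsGreatest
      {μ : ℝ | ∃ v : Fin n → ℝ, v ≠ 0 ∧ (G.adjMatrix ℝ).mulVec v = μ • v} lam1) :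
    Summable (fun ξ : Fin n → ℕ =>
        ((Finset.univ.filter (fun i => 0 < ξ i)).card : ℝ) * Real.exp (W G α β ξ))
      ↔ α < 0 ∧ α + β * lam1 < 0 := by
  have hPSD := psd_aux G lam1 hlam
  have hlam0 := lam1_nonneg G lam1 hlam
  constructor
  · intro hs
    have hα : α < 0 := by
      by_contra hcon
      push_neg at hcon
      set i₀ : Fin n := ⟨0, hn⟩ with hi₀
      set ι : ℕ → (Fin n → ℕ) := fun k => fun i => if i = i₀ then k + 1 else 0 with hι
      have hinj : Function.Injective ι := by
        intro a b h
        have := congrFun h i₀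
        simpa [hι] using this
      have h0 := (hs.comp_injective hinj).tendsto_atTop_zero
      have hterm : ∀ k : ℕ, (1:ℝ) ≤ ((fun ξ : Fin n → ℕ =>
          ((Finset.univ.filter (fun i => 0 < ξ i)).card : ℝ) * Real.exp (W G α β ξ)) ∘ ι) k := by
        intro k
        have hfil : Finset.univ.filter (fun i => 0 < ι k i) = {i₀} := by
          ext i
          by_cases h : i = i₀ <;> simp [hι, h]
        have hW : W G α β (ι k) = α / 2 * ((k+1) * k) := by
          have e1 : ∑ i, ((ι k i : ℝ) * ((ι k i : ℝ) - 1)) = ((k:ℝ)+1) * k := by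
            rw [Finset.sum_eq_single i₀]
            · simp [hι]
            · intro b _ hb; simp [hι, hb]
            · intro h; exact absurd (Finset.mem_univ i₀) h
          have e2 : ∑ i, ∑ j, G.adjMatrix ℝ i j * (ι k i : ℝ) * (ι k j : ℝ) = 0 := by
            apply Finset.sum_eq_zero
            intro i _
            apply Finset.sum_eq_zero
            intro j _
            by_cases hij : i = i₀
            · by_cases hj : j = i₀
              · subst hij; subst hj; simp
              · simp [hι, hj]
            · simp [hι, hij]
          rw [W, e1, e2]
          ring
        simp only [Function.comp_apply, hfil, hW, Finset.card_singleton, Nat.cast_one, one_mul]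
        apply Real.one_le_exp
        have : (0:ℝ) ≤ ((k:ℝ)+1) * k := by positivity
        have hα2 : (0:ℝ) ≤ α / 2 := by linarith
        positivity
      have := ge_of_tendsto h0 (Filter.Eventually.of_forall hterm)
      linarith
    refine ⟨hα, ?_⟩
    by_contra hcon
    push_neg at hcon
    rcases le_or_gt β 0 with hβ | hβ
    · nlinarith [mul_nonneg (neg_nonneg.2 hβ) hlam0]
    · obtain ⟨w, hwne, hwpos, hAw⟩ := perron_aux G lam1 hlam
      obtain ⟨i₀, hi₀⟩ : ∃ i, 0 < w i := by
        rcases Function.ne_iff.1 hwne with ⟨i, hi⟩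
        exact ⟨i, lt_of_le_of_ne (hwpos i) (Ne.symm (by simpa using hi))⟩
      set u : Fin n → ℝ := (w i₀)⁻¹ • w with hu
      have hu0 : ∀ i, 0 ≤ u i := fun i => mul_nonneg (inv_nonneg.2 hi₀.le) (hwpos i)
      have hui₀ : u i₀ = 1 := by
        simp only [hu, Pi.smul_apply, smul_eq_mul]
        exact inv_mul_cancel₀ hi₀.ne'
      have hAu : (G.adjMatrix ℝ).mulVec u = lam1 • u := by
        rw [hu, Matrix.mulVec_smul, hAw, smul_comm]
      set M : Matrix (Fin n) (Fin n) ℝ := lam1 • 1 - G.adjMatrix ℝ with hM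
      have hMu : M.mulVec u = 0 := by
        rw [hM, Matrix.sub_mulVec, Matrix.smul_mulVec, Matrix.one_mulVec, hAu, sub_self]
      have hMT : Mᵀ = M := by
        rw [← Matrix.conjTranspose_eq_transpose_of_trivial]
        exact hPSD.1
      set C : ℝ := ∑ i, ∑ j, |M i j| with hC
      set ι : ℕ → (Fin n → ℕ) := fun t => fun i => ⌊(t:ℝ) * u i⌋₊ with hι
      have hιi₀ : ∀ t : ℕ, ι t i₀ = t := by
        intro t
        simp [hι, hui₀]
      have hinj : Function.Injective ι := by
        intro a b h
        have h1 := hιi₀ a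
        have h2 := hιi₀ b
        rw [← h1, ← h2, h]
      have hWlb : ∀ t : ℕ, (-α/2) * t - (β/2) * C ≤ W G α β (ι t) := by
        intro t
        set x : Fin n → ℝ := fun i => ((ι t i : ℕ) : ℝ) with hx
        have hx0 : ∀ i, 0 ≤ x i := fun i => Nat.cast_nonneg _
        set ε : Fin n → ℝ := fun i => (t:ℝ) * u i - x i with hε
        have hε0 : ∀ i, 0 ≤ ε i := by
          intro i
          have := Nat.floor_le (mul_nonneg (Nat.cast_nonneg t) (hu0 i))
          simp only [hε, hx, hι]
          linarith
        have hε1 : ∀ i, ε i ≤ 1 := by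
          intro i
          have := Nat.lt_floor_add_one ((t:ℝ) * u i)
          simp only [hε, hx, hι]
          linarith
        have hxu : x = (t:ℝ) • u - ε := by
          funext i
          simp [hε]
        have hMx : M.mulVec x = 0 - M.mulVec ε := by
          rw [hxu, Matrix.mulVec_sub, Matrix.mulVec_smul, hMu, smul_zero]
        have huMε : u ⬝ᵥ M.mulVec ε = 0 := by
          rw [Matrix.dotProduct_mulVec]
          have : u ᵥ* M = M.mulVec u := by
            conv_lhs => rw [← hMT]
            rw [Matrix.vecMul_transpose]
          rw [this, hMu]
          simp
        have hq : x ⬝ᵥ M.mulVec x = ε ⬝ᵥ M.mulVec ε := by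
          rw [hMx, dotProduct_sub, dotProduct_zero, hxu,
            sub_dotProduct, smul_dotProduct, huMε]
          simp
        have hqC : x ⬝ᵥ M.mulVec x ≤ C := by
          rw [hq, hC]
          simp only [dotProduct, Matrix.mulVec, Finset.mul_sum]
          apply Finset.sum_le_sum
          intro i _
          apply Finset.sum_le_sum
          intro j _
          have h1 : ε i * (M i j * ε j) ≤ |ε i * (M i j * ε j)| := le_abs_self _
          have h2 : |ε i * (M i j * ε j)| = ε i * |M i j| * ε j := by
            rw [abs_mul, abs_mul, abs_of_nonneg (hε0 i), abs_of_nonneg (hε0 j)]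
            ring
          have h3 : ε i * |M i j| ≤ 1 * |M i j| :=
            mul_le_mul_of_nonneg_right (hε1 i) (abs_nonneg _)
          have h4 : ε i * |M i j| * ε j ≤ 1 * |M i j| * 1 :=
            mul_le_mul h3 (hε1 j) (hε0 j) (by positivity)
          calc ε i * (M i j * ε j) ≤ |ε i * (M i j * ε j)| := h1
            _ = ε i * |M i j| * ε j := h2
            _ ≤ 1 * |M i j| * 1 := h4
            _ = |M i j| := by ring
        have hqA : x ⬝ᵥ (G.adjMatrix ℝ).mulVec x
            = lam1 * (x ⬝ᵥ x) - x ⬝ᵥ M.mulVec x := by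
          have hA : G.adjMatrix ℝ = lam1 • 1 - M := by
            rw [hM]; abel
          rw [hA, Matrix.sub_mulVec, Matrix.smul_mulVec, Matrix.one_mulVec,
            dotProduct_sub, dotProduct_smul, smul_eq_mul]
        have hxx : x ⬝ᵥ x = ∑ i, x i ^ 2 :=
          Finset.sum_congr rfl (fun i _ => by rw [pow_two])
        have hs0 : (0:ℝ) ≤ ∑ i, x i ^ 2 := Finset.sum_nonneg (fun i _ => sq_nonneg _)
        have hxsum : (t:ℝ) ≤ ∑ i, x i := by
          have h1 : x i₀ = (t:ℝ) := by
            show ((ι t i₀ : ℕ) : ℝ) = (t:ℝ)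
            rw [hιi₀]
          have := Finset.single_le_sum (f := x) (fun i _ => hx0 i) (Finset.mem_univ i₀)
          linarith
        rw [W_eq]
        have hxeq : (fun i => ((ι t i : ℕ) : ℝ)) = x := rfl
        rw [hxeq, hqA, hxx]
        have t1 : 0 ≤ (α + β * lam1) / 2 * (∑ i, x i ^ 2) :=
          mul_nonneg (by linarith) hs0
        have t2 : β / 2 * (x ⬝ᵥ M.mulVec x) ≤ β / 2 * C :=
          mul_le_mul_of_nonneg_left hqC (by linarith)
        nlinarith [t1, t2]
      have h0 := (hs.comp_injective hinj).tendsto_atTop_zero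
      have hF : ∀ᶠ t : ℕ in Filter.atTop, (1:ℝ) ≤ ((fun ξ : Fin n → ℕ =>
          ((Finset.univ.filter (fun i => 0 < ξ i)).card : ℝ) * Real.exp (W G α β ξ)) ∘ ι) t := by
        filter_upwards [Filter.eventually_ge_atTop (max 1 ⌈(β * C) / (-α)⌉₊)] with t ht
        have ht1 : 1 ≤ t := le_trans (le_max_left _ _) ht
        have ht2 : ⌈(β * C) / (-α)⌉₊ ≤ t := le_trans (le_max_right _ _) ht
        have htr : (β * C) / (-α) ≤ (t:ℝ) :=
          le_trans (Nat.le_ceil _) (by exact_mod_cast ht2)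
        have hαpos : (0:ℝ) < -α := by linarith
        have hWpos : 0 ≤ W G α β (ι t) := by
          have := hWlb t
          have h2 : β * C ≤ (-α) * t := by
            have := mul_le_mul_of_nonneg_left htr hαpos.le
            rwa [mul_div_cancel₀ _ hαpos.ne'] at this
          nlinarith
        have hexp1 : (1:ℝ) ≤ Real.exp (W G α β (ι t)) := Real.one_le_exp hWpos
        have hcard1 : (1:ℝ) ≤ ((Finset.univ.filter (fun i => 0 < ι t i)).card : ℝ) := by
          have hmem : i₀ ∈ Finset.univ.filter (fun i => 0 < ι t i) := by
            rw [Finset.mem_filter]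
            exact ⟨Finset.mem_univ _, by rw [hιi₀]; exact ht1⟩
          have := Finset.card_pos.2 ⟨i₀, hmem⟩
          exact_mod_cast this
        have := mul_le_mul hcard1 hexp1 (by norm_num) (by linarith)
        simpa using this
      have := ge_of_tendsto h0 hF
      linarith
  · rintro ⟨hα, hγ⟩
    set c : ℝ := α + max β 0 * lam1 with hc
    have hcneg : c < 0 := by
      rcases le_total β 0 with h | h
      · rw [hc, max_eq_right h]; linarith
      · rw [hc, max_eq_left h]; linarith
    set f : ℕ → ℝ := fun k => Real.exp (c / 2 * k ^ 2 + (-α / 2) * k) with hf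
    have hfs : Summable f := summable_exp_quad (by linarith)
    have hfp : ∀ k, 0 ≤ f k := fun k => (Real.exp_pos _).le
    have hprod := summable_pi_prod hfs hfp n
    refine Summable.of_nonneg_of_le (f := fun ξ : Fin n → ℕ => (n : ℝ) * ∏ i, f (ξ i))
      (fun ξ => mul_nonneg (Nat.cast_nonneg _) (Real.exp_pos _).le)
      (fun ξ => ?_) (hprod.mul_left _)
    set x : Fin n → ℝ := fun i => (ξ i : ℝ) with hx
    have hx0 : ∀ i, 0 ≤ x i := fun i => Nat.cast_nonneg _
    have hq0 : 0 ≤ x ⬝ᵥ (G.adjMatrix ℝ).mulVec x := adj_quad_nonneg G x hx0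
    have hray := rayleigh_aux hPSD x
    have hxx : x ⬝ᵥ x = ∑ i, x i ^ 2 :=
      Finset.sum_congr rfl (fun i _ => by rw [pow_two])
    have hs0 : (0:ℝ) ≤ ∑ i, x i ^ 2 :=
      Finset.sum_nonneg (fun i _ => sq_nonneg _)
    have hW : W G α β ξ ≤ ∑ i, (c / 2 * x i ^ 2 + (-α / 2) * x i) := by
      rw [W_eq]
      have hsum : ∑ i, (c / 2 * x i ^ 2 + (-α / 2) * x i)
          = c / 2 * (∑ i, x i ^ 2) + (-α / 2) * (∑ i, x i) := by
        rw [Finset.sum_add_distrib, ← Finset.mul_sum, ← Finset.mul_sum]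
      rw [hsum]
      have hkey : β / 2 * (x ⬝ᵥ (G.adjMatrix ℝ).mulVec x)
          ≤ max β 0 * lam1 / 2 * (∑ i, x i ^ 2) := by
        rcases le_total β 0 with h | h
        · rw [max_eq_right h]
          nlinarith
        · rw [max_eq_left h]
          rw [hxx] at hray
          nlinarith
      have : c / 2 * (∑ i, x i ^ 2)
          = α / 2 * (∑ i, x i ^ 2) + max β 0 * lam1 / 2 * (∑ i, x i ^ 2) := by
        rw [hc]; ring
      rw [this]
      linarith
    have hcard : ((Finset.univ.filter (fun i => 0 < ξ i)).card : ℝ) ≤ (n : ℝ) := by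
      have := Finset.card_filter_le Finset.univ (fun i => 0 < ξ i)
      simp only [Finset.card_univ, Fintype.card_fin] at this
      exact_mod_cast this
    have hexp : Real.exp (W G α β ξ) ≤ ∏ i, f (ξ i) := by
      have : ∏ i, f (ξ i) = Real.exp (∑ i, (c / 2 * x i ^ 2 + (-α / 2) * x i)) := by
        rw [Real.exp_sum]
      rw [this]
      exact Real.exp_le_exp.2 hW
    exact mul_le_mul hcard hexp (Real.exp_pos _).le (Nat.cast_nonneg _)
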